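/- Let $Y$ be a $T\times n$ real matrix, $X$ a $T\times k$ real matrix, $\Sigma$ an $n\times n$ symmetric positive definite matrix, and $\Psi$ a $k\times k$ symmetric positive definite matrix. Suppose $Y \mid A \sim \mathcal{MN}(XA', \Sigma, I_T)$ and $A \mid \Sigma \sim \mathcal{MN}(\underline{A}, \Sigma, \Psi)$ (matrix-normal distributions). Then the marginal density of $Y$ given $\Sigma$ equals $(2\pi)^{-nT/2} |\Psi|^{-n/2} |S_{xx}|^{-n/2} |\Sigma|^{-T/2} \exp(-\tfrac12 \mathrm{tr}(\Sigma^{-1} S_{y|x}))$, where $S_{xx} = X'X + \Psi^{-1}$, $S_{yx} = Y'X + \underline{A}\Psi^{-1}$, $S_{yy} = Y'Y + \underline{A}\Psi^{-1}\underline{A}'$, and $S_{y|x} = S_{yy} - S_{yx} S_{xx}^{-1} S_{yx}'$. -/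

import Mathlib

open Matrix Real MeasureTheory

/-- Matrix-normal density `MN(M, S, P)` for an `n × k` matrix, with row covariance `S`
and column covariance `P`. -/
noncomputable def matrixNormalPDF {n k : ℕ} (M : Matrix (Fin n) (Fin k) ℝ)
    (S : Matrix (Fin n) (Fin n) ℝ) (P : Matrix (Fin k) (Fin k) ℝ)
    (A : Matrix (Fin n) (Fin k) ℝ) : ℝ :=
  (2 * π) ^ (-(n * k : ℝ) / 2) * P.det ^ (-(n : ℝ) / 2) * S.det ^ (-(k : ℝ) / 2) *
    Real.exp (-(1 / 2) * (S⁻¹ * (A - M) * P⁻¹ * (A - M)ᵀ).trace)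

lemma gauss_std (n k : ℕ) :
    ∫ x : Fin n → Fin k → ℝ, Real.exp (-(1/2) * ∑ i, ∑ j, (x i j)^2)
      = (2*π) ^ ((n*k : ℝ)/2) := by
  have h1 : ∀ x : Fin n → Fin k → ℝ,
      Real.exp (-(1/2) * ∑ i, ∑ j, (x i j)^2) = ∏ i, ∏ j, Real.exp (-(1/2) * (x i j)^2) := by
    intro x
    simp_rw [Finset.mul_sum, Real.exp_sum]
  simp_rw [h1]
  rw [MeasureTheory.integral_fintype_prod_volume_eq_prod
      (f := fun (_ : Fin n) (y : Fin k → ℝ) => ∏ j, Real.exp (-(1/2) * (y j)^2))]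
  have h2 : (∫ y : Fin k → ℝ, ∏ j, Real.exp (-(1/2) * (y j)^2)) = (2*π)^((k:ℝ)/2) := by
    rw [MeasureTheory.integral_fintype_prod_volume_eq_prod
        (f := fun (_ : Fin k) (t : ℝ) => Real.exp (-(1/2) * t^2))]
    have h3 : (∫ t : ℝ, Real.exp (-(1/2) * t^2)) = Real.sqrt (2*π) := by
      have h := integral_gaussian (1/2)
      rw [h]
      congr 1; ring
    rw [h3, Finset.prod_const]
    simp only [Finset.card_univ, Fintype.card_fin]
    rw [show Real.sqrt (2*π) = (2*π)^((1:ℝ)/2) from Real.sqrt_eq_rpow _,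
      ← Real.rpow_natCast ((2*π)^((1:ℝ)/2)) k, ← Real.rpow_mul (by positivity)]
    ring_nf
  rw [h2, Finset.prod_const]
  simp only [Finset.card_univ, Fintype.card_fin]
  rw [← Real.rpow_natCast ((2*π)^((k:ℝ)/2)) n, ← Real.rpow_mul (by positivity)]
  ring_nf

variable {n k : ℕ}

noncomputable def mulLR (R : Matrix (Fin n) (Fin n) ℝ) (L : Matrix (Fin k) (Fin k) ℝ) :
    (Fin n → Fin k → ℝ) →ₗ[ℝ] (Fin n → Fin k → ℝ) where
  toFun A := Matrix.of.symm (R * Matrix.of A * L)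
  map_add' A B := by
    show Matrix.of.symm (R * (Matrix.of A + Matrix.of B) * L) = _
    rw [Matrix.mul_add, Matrix.add_mul]; rfl
  map_smul' c A := by
    show Matrix.of.symm (R * (c • Matrix.of A) * L) = _
    rw [Matrix.mul_smul, Matrix.smul_mul]; rfl

lemma det_mulLR (R : Matrix (Fin n) (Fin n) ℝ) (L : Matrix (Fin k) (Fin k) ℝ) :
    LinearMap.det (mulLR R L) = R.det ^ k * L.det ^ n := by
  have h := LinearMap.det_conj (mulLR R L) (LinearEquiv.curry ℝ ℝ (Fin n) (Fin k)).symm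
  rw [← h]
  have : ((LinearEquiv.curry ℝ ℝ (Fin n) (Fin k)).symm : (Fin n → Fin k → ℝ) →ₗ[ℝ] _) ∘ₗ
      (mulLR R L) ∘ₗ ((LinearEquiv.curry ℝ ℝ (Fin n) (Fin k)).symm.symm : _) =
      Matrix.toLin' (kroneckerMap (· * ·) R Lᵀ) := by
    apply LinearMap.ext
    intro x
    funext p
    obtain ⟨i, j⟩ := p
    simp only [LinearMap.coe_comp, Function.comp_apply, LinearEquiv.coe_coe,
      Matrix.toLin'_apply, Matrix.mulVec, dotProduct]
    rw [Fintype.sum_prod_type]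
    show (R * Matrix.of (fun a b => x (a, b)) * L) i j = _
    rw [Matrix.mul_apply]
    simp_rw [Matrix.mul_apply, Finset.sum_mul]
    rw [Finset.sum_comm]
    congr 1; ext m; congr 1; ext p
    simp [Matrix.kroneckerMap_apply]
    ring
  rw [this, LinearMap.det_toLin', Matrix.det_kronecker, Matrix.det_transpose]
  simp

lemma integral_comp_mulLR (R : Matrix (Fin n) (Fin n) ℝ) (L : Matrix (Fin k) (Fin k) ℝ)
    (hR : R.det ≠ 0) (hL : L.det ≠ 0) (f : (Fin n → Fin k → ℝ) → ℝ) :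
    ∫ A : Fin n → Fin k → ℝ, f (Matrix.of.symm (R * Matrix.of A * L))
      = |R.det ^ k * L.det ^ n|⁻¹ * ∫ A : Fin n → Fin k → ℝ, f A := by
  have hdet : LinearMap.det (mulLR R L) ≠ 0 := by
    rw [det_mulLR]; exact mul_ne_zero (pow_ne_zero _ hR) (pow_ne_zero _ hL)
  set g := mulLR R L with hg
  have heqv : ∀ A, f (Matrix.of.symm (R * Matrix.of A * L)) = f (g A) := fun A => rfl
  simp_rw [heqv]
  let e : (Fin n → Fin k → ℝ) ≃ᵐ (Fin n → Fin k → ℝ) :=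
    (g.equivOfDetNeZero hdet).toContinuousLinearEquiv.toHomeomorph.toMeasurableEquiv
  have hce : ∀ A, g A = e A := fun A => rfl
  have h1 : ∫ A : Fin n → Fin k → ℝ, f (g A) = ∫ y, f y ∂(Measure.map e volume) := by
    rw [MeasureTheory.integral_map_equiv]
    exact integral_congr_ae (Filter.Eventually.of_forall fun A => congrArg f (hce A))
  have h2 : Measure.map (⇑e) (volume : Measure (Fin n → Fin k → ℝ))
      = ENNReal.ofReal |(LinearMap.det g)⁻¹| • volume := by
    have := MeasureTheory.Measure.map_linearMap_addHaar_eq_smul_addHaar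
      (volume : Measure (Fin n → Fin k → ℝ)) (f := g) hdet
    rw [← this]
    rfl
  rw [h1, h2, MeasureTheory.integral_smul_measure]
  rw [ENNReal.toReal_ofReal (abs_nonneg _), det_mulLR, abs_inv]
  simp [smul_eq_mul]

open scoped MatrixOrder in
lemma sqrt_facts (P : Matrix (Fin n) (Fin n) ℝ) (hP : P.PosDef) :
    ∃ R : Matrix (Fin n) (Fin n) ℝ, Rᵀ = R ∧ 0 < R.det ∧ R * R = P := by
  refine ⟨CFC.sqrt P, ?_, ?_, CFC.sqrt_mul_sqrt_self P hP.posSemidef.nonneg⟩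
  · have := (CFC.sqrt_nonneg P).posSemidef.isHermitian.eq
    rwa [Matrix.conjTranspose_eq_transpose_of_trivial] at this
  · rw [hP.posSemidef.det_sqrt, RCLike.sqrt_of_nonneg hP.posSemidef.det_nonneg]
    simpa using Real.sqrt_pos.mpr hP.det_pos

lemma rpow_helper (x : ℝ) (hx : 0 < x) (m : ℕ) : (x^2 : ℝ) ^ (-(m:ℝ)/2) = (x^m)⁻¹ := by
  rw [← Real.rpow_natCast x 2, ← Real.rpow_mul hx.le, ← Real.rpow_natCast x m,
    ← Real.rpow_neg hx.le]
  congr 1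
  push_cast
  ring

lemma trace_mul_transpose_self (M : Matrix (Fin n) (Fin k) ℝ) :
    (M * Mᵀ).trace = ∑ i, ∑ j, (M i j)^2 := by
  simp [Matrix.trace, Matrix.diag, Matrix.mul_apply, Matrix.transpose_apply, sq]

lemma gauss_matrix (P : Matrix (Fin n) (Fin n) ℝ) (Q : Matrix (Fin k) (Fin k) ℝ)
    (hP : P.PosDef) (hQ : Q.PosDef) :
    ∫ A : Fin n → Fin k → ℝ, Real.exp (-(1/2) * (P * Matrix.of A * Q * (Matrix.of A)ᵀ).trace)
      = (2*π) ^ ((n*k : ℝ)/2) * P.det ^ (-(k:ℝ)/2) * Q.det ^ (-(n:ℝ)/2) := by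
  obtain ⟨R, hRt, hRpos, hRmul⟩ := sqrt_facts P hP
  obtain ⟨L, hLt, hLpos, hLmul⟩ := sqrt_facts Q hQ
  have key : ∀ A : Matrix (Fin n) (Fin k) ℝ,
      (P * A * Q * Aᵀ).trace = ∑ i, ∑ j, ((R * A * L) i j)^2 := by
    intro A
    have h1 : (R * A * L) * (R * A * L)ᵀ = R * (A * Q * Aᵀ * R) := by
      rw [Matrix.transpose_mul, Matrix.transpose_mul, hRt, hLt, ← hLmul]
      simp only [Matrix.mul_assoc]
    have h2 : ((R * A * L) * (R * A * L)ᵀ).trace = (P * A * Q * Aᵀ).trace := by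
      rw [h1, Matrix.trace_mul_comm, Matrix.mul_assoc (A * Q * Aᵀ) R R, hRmul,
        Matrix.trace_mul_comm (A * Q * Aᵀ) P]
      congr 1
      simp only [Matrix.mul_assoc]
    rw [← h2, trace_mul_transpose_self]
  simp_rw [key]
  have hcomp := integral_comp_mulLR R L hRpos.ne' hLpos.ne'
    (fun B : Fin n → Fin k → ℝ => Real.exp (-(1/2) * ∑ i, ∑ j, (B i j)^2))
  calc (∫ A : Fin n → Fin k → ℝ, Real.exp (-(1/2) * ∑ i, ∑ j, ((R * Matrix.of A * L) i j)^2))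
      = |R.det ^ k * L.det ^ n|⁻¹ *
        ∫ A : Fin n → Fin k → ℝ, Real.exp (-(1/2) * ∑ i, ∑ j, (A i j)^2) := hcomp
    _ = (2*π) ^ ((n*k : ℝ)/2) * P.det ^ (-(k:ℝ)/2) * Q.det ^ (-(n:ℝ)/2) := by
        rw [gauss_std]
        have hPdet : P.det = R.det ^ 2 := by rw [← hRmul, Matrix.det_mul, sq]
        have hQdet : Q.det = L.det ^ 2 := by rw [← hLmul, Matrix.det_mul, sq]
        rw [hPdet, hQdet, rpow_helper _ hRpos k, rpow_helper _ hLpos n,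
          abs_of_pos (by positivity), mul_inv]
        ring

lemma complete_square {n k T : ℕ}
    (Y : Matrix (Fin T) (Fin n) ℝ) (X : Matrix (Fin T) (Fin k) ℝ)
    (Psi : Matrix (Fin k) (Fin k) ℝ)
    (Abar : Matrix (Fin n) (Fin k) ℝ)
    (Sxx : Matrix (Fin k) (Fin k) ℝ) (Syx : Matrix (Fin n) (Fin k) ℝ)
    (Syy Sygx : Matrix (Fin n) (Fin n) ℝ)
    (hSxxPD : Sxx.PosDef)
    (hPsiT : Psi⁻¹ᵀ = Psi⁻¹)
    (hSxxT : Sxxᵀ = Sxx)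
    (hSxx : Sxx = Xᵀ * X + Psi⁻¹)
    (hSyx : Syx = Yᵀ * X + Abar * Psi⁻¹)
    (hSyy : Syy = Yᵀ * Y + Abar * Psi⁻¹ * Abarᵀ)
    (hSygx : Sygx = Syy - Syx * Sxx⁻¹ * Syxᵀ)
    (A : Matrix (Fin n) (Fin k) ℝ) :
    (Y - X * Aᵀ)ᵀ * (Y - X * Aᵀ) + (A - Abar) * Psi⁻¹ * (A - Abar)ᵀ
      = (A - Syx * Sxx⁻¹) * Sxx * (A - Syx * Sxx⁻¹)ᵀ + Sygx := by
  have hU : IsUnit Sxx.det := hSxxPD.det_pos.ne'.isUnit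
  have hAhT : (Syx * Sxx⁻¹)ᵀ = Sxx⁻¹ * Syxᵀ := by
    rw [Matrix.transpose_mul, Matrix.transpose_nonsing_inv, hSxxT]
  have f1 : Syx * Sxx⁻¹ * Sxx = Syx := by
    rw [Matrix.mul_assoc, Matrix.nonsing_inv_mul _ hU, Matrix.mul_one]
  have f2 : Sxx * (Sxx⁻¹ * Syxᵀ) = Syxᵀ := by
    rw [← Matrix.mul_assoc, Matrix.mul_nonsing_inv _ hU, Matrix.one_mul]
  have g1 : (A - Syx * Sxx⁻¹) * Sxx * (A - Syx * Sxx⁻¹)ᵀ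
      = A * Sxx * Aᵀ - A * Syxᵀ - Syx * Aᵀ + Syx * Sxx⁻¹ * Syxᵀ := by
    rw [Matrix.transpose_sub, hAhT]
    simp only [Matrix.sub_mul, Matrix.mul_sub, Matrix.mul_assoc,
      Matrix.mul_nonsing_inv_cancel_left _ _ hU, Matrix.nonsing_inv_mul_cancel_left _ _ hU]
    abel
  have g2 : (Y - X * Aᵀ)ᵀ * (Y - X * Aᵀ)
      = Yᵀ * Y - Yᵀ * X * Aᵀ - A * (Xᵀ * Y) + A * (Xᵀ * X) * Aᵀ := by
    rw [Matrix.transpose_sub, Matrix.transpose_mul, Matrix.transpose_transpose]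
    simp only [Matrix.sub_mul, Matrix.mul_sub, Matrix.mul_assoc]
    abel
  have g3 : (A - Abar) * Psi⁻¹ * (A - Abar)ᵀ
      = A * Psi⁻¹ * Aᵀ - A * (Psi⁻¹ * Abarᵀ) - Abar * Psi⁻¹ * Aᵀ + Abar * Psi⁻¹ * Abarᵀ := by
    rw [Matrix.transpose_sub]
    simp only [Matrix.sub_mul, Matrix.mul_sub, Matrix.mul_assoc]
    abel
  rw [g1, g2, g3, hSygx, hSyy, hSxx, hSyx]
  rw [Matrix.transpose_add, Matrix.transpose_mul, Matrix.transpose_mul, hPsiT,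
    Matrix.transpose_transpose]
  simp only [Matrix.mul_add, Matrix.add_mul, Matrix.mul_assoc]
  abel


theorem marginal_likelihood_of_matrix_normal
    {n k T : ℕ}
    (Y : Matrix (Fin T) (Fin n) ℝ) (X : Matrix (Fin T) (Fin k) ℝ)
    (Sig : Matrix (Fin n) (Fin n) ℝ) (Psi : Matrix (Fin k) (Fin k) ℝ)
    (Abar : Matrix (Fin n) (Fin k) ℝ)
    (hSig : Sig.PosDef) (hPsi : Psi.PosDef)
    (Sxx : Matrix (Fin k) (Fin k) ℝ) (Syx : Matrix (Fin n) (Fin k) ℝ)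
    (Syy Sygx : Matrix (Fin n) (Fin n) ℝ)
    (hSxx : Sxx = Xᵀ * X + Psi⁻¹)
    (hSyx : Syx = Yᵀ * X + Abar * Psi⁻¹)
    (hSyy : Syy = Yᵀ * Y + Abar * Psi⁻¹ * Abarᵀ)
    (hSygx : Sygx = Syy - Syx * Sxx⁻¹ * Syxᵀ) :
    (∫ A : Fin n → Fin k → ℝ,
        -- likelihood `P(Y | A, Sig)`, i.e. `Y | A ~ MN(X Aᵀ, Sig, I_T)` viewed as density in `Y`
        ((2 * π) ^ (-(n * T : ℝ) / 2) * Sig.det ^ (-(T : ℝ) / 2) *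
          Real.exp (-(1 / 2) * (Sig⁻¹ * (Y - X * (Matrix.of A)ᵀ)ᵀ * (Y - X * (Matrix.of A)ᵀ)).trace))
        -- prior `P(A | Sig) = MN(Abar, Sig, Psi)`
        * matrixNormalPDF Abar Sig Psi (Matrix.of A))
      = (2 * π) ^ (-(n * T : ℝ) / 2) * Psi.det ^ (-(n : ℝ) / 2) * Sxx.det ^ (-(n : ℝ) / 2) *
          Sig.det ^ (-(T : ℝ) / 2) * Real.exp (-(1 / 2) * (Sig⁻¹ * Sygx).trace) := by
  have hPsiInv : Psi⁻¹.PosDef := hPsi.inv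
  have hXtX : (Xᵀ * X).PosSemidef := by
    have h := Matrix.posSemidef_conjTranspose_mul_self X
    rwa [Matrix.conjTranspose_eq_transpose_of_trivial] at h
  have hSxxPD : Sxx.PosDef := by rw [hSxx, add_comm]; exact hPsiInv.add_posSemidef hXtX
  have hSinv : Sig⁻¹.PosDef := hSig.inv
  have hPsiT : Psi⁻¹ᵀ = Psi⁻¹ := by
    rw [Matrix.transpose_nonsing_inv]
    congr 1
    have := hPsi.isHermitian.eq
    rwa [Matrix.conjTranspose_eq_transpose_of_trivial] at this
  have hSxxT : Sxxᵀ = Sxx := by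
    rw [hSxx, Matrix.transpose_add, Matrix.transpose_mul, Matrix.transpose_transpose, hPsiT]
  have key := complete_square Y X Psi Abar Sxx Syx Syy Sygx hSxxPD hPsiT hSxxT hSxx hSyx hSyy hSygx
  set Ah : Matrix (Fin n) (Fin k) ℝ := Syx * Sxx⁻¹ with hAh
  set C : ℝ := ((2 * π) ^ (-(n * T : ℝ) / 2) * Sig.det ^ (-(T : ℝ) / 2) *
      ((2 * π) ^ (-(n * k : ℝ) / 2) * Psi.det ^ (-(n : ℝ) / 2) * Sig.det ^ (-(k : ℝ) / 2))) *
      Real.exp (-(1 / 2) * (Sig⁻¹ * Sygx).trace) with hC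
  have hpt : ∀ A : Fin n → Fin k → ℝ,
      ((2 * π) ^ (-(n * T : ℝ) / 2) * Sig.det ^ (-(T : ℝ) / 2) *
          Real.exp (-(1 / 2) * (Sig⁻¹ * (Y - X * (Matrix.of A)ᵀ)ᵀ * (Y - X * (Matrix.of A)ᵀ)).trace))
        * matrixNormalPDF Abar Sig Psi (Matrix.of A)
      = C * Real.exp (-(1 / 2) *
          ((Sig⁻¹ * (Matrix.of A - Ah) * Sxx * (Matrix.of A - Ah)ᵀ).trace)) := by
    intro A
    have htr : (Sig⁻¹ * (Y - X * (Matrix.of A)ᵀ)ᵀ * (Y - X * (Matrix.of A)ᵀ)).trace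
          + (Sig⁻¹ * (Matrix.of A - Abar) * Psi⁻¹ * (Matrix.of A - Abar)ᵀ).trace
        = (Sig⁻¹ * (Matrix.of A - Ah) * Sxx * (Matrix.of A - Ah)ᵀ).trace
          + (Sig⁻¹ * Sygx).trace := by
      have h2 := congrArg (fun M => (Sig⁻¹ * M).trace) (key (Matrix.of A))
      simpa [Matrix.mul_add, Matrix.trace_add, Matrix.mul_assoc] using h2
    unfold matrixNormalPDF
    rw [hC]
    set u1 : ℝ := (Sig⁻¹ * (Y - X * (Matrix.of A)ᵀ)ᵀ * (Y - X * (Matrix.of A)ᵀ)).trace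
    set u2 : ℝ := (Sig⁻¹ * (Matrix.of A - Abar) * Psi⁻¹ * (Matrix.of A - Abar)ᵀ).trace
    set v1 : ℝ := (Sig⁻¹ * (Matrix.of A - Ah) * Sxx * (Matrix.of A - Ah)ᵀ).trace
    set v2 : ℝ := (Sig⁻¹ * Sygx).trace
    have hexp : Real.exp (-(1/2) * u1) * Real.exp (-(1/2) * u2)
        = Real.exp (-(1/2) * v1) * Real.exp (-(1/2) * v2) := by
      rw [← Real.exp_add, ← Real.exp_add, ← mul_add, ← mul_add, htr]
    calc ((2 * π) ^ (-(n * T : ℝ) / 2) * Sig.det ^ (-(T : ℝ) / 2) * Real.exp (-(1/2) * u1))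
          * ((2 * π) ^ (-(n * k : ℝ) / 2) * Psi.det ^ (-(n : ℝ) / 2) * Sig.det ^ (-(k : ℝ) / 2)
            * Real.exp (-(1/2) * u2))
        = ((2 * π) ^ (-(n * T : ℝ) / 2) * Sig.det ^ (-(T : ℝ) / 2) *
            ((2 * π) ^ (-(n * k : ℝ) / 2) * Psi.det ^ (-(n : ℝ) / 2) * Sig.det ^ (-(k : ℝ) / 2)))
            * (Real.exp (-(1/2) * u1) * Real.exp (-(1/2) * u2)) := by ring
      _ = _ := by rw [hexp]; ring
  rw [integral_congr_ae (Filter.Eventually.of_forall hpt), MeasureTheory.integral_const_mul]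
  have htrans : (∫ A : Fin n → Fin k → ℝ, Real.exp (-(1/2) *
        ((Sig⁻¹ * (Matrix.of A - Ah) * Sxx * (Matrix.of A - Ah)ᵀ).trace)))
      = ∫ A : Fin n → Fin k → ℝ, Real.exp (-(1/2) *
        ((Sig⁻¹ * Matrix.of A * Sxx * (Matrix.of A)ᵀ).trace)) := by
    exact MeasureTheory.integral_sub_right_eq_self
      (fun B : Fin n → Fin k → ℝ => Real.exp (-(1/2) *
        ((Sig⁻¹ * Matrix.of B * Sxx * (Matrix.of B)ᵀ).trace))) (Matrix.of.symm Ah)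
  rw [htrans, gauss_matrix Sig⁻¹ Sxx hSinv hSxxPD]
  have h2π : (0:ℝ) < 2 * π := by positivity
  have e1 : (2 * π) ^ (-(n * k : ℝ) / 2) = ((2 * π) ^ ((n * k : ℝ) / 2))⁻¹ := by
    rw [neg_div, Real.rpow_neg h2π.le]
  have e2 : (Sig⁻¹).det ^ (-(k : ℝ) / 2) = (Sig.det ^ (-(k : ℝ) / 2))⁻¹ := by
    rw [Matrix.det_nonsing_inv, Ring.inverse_eq_inv', Real.inv_rpow hSig.det_pos.le]
  rw [hC, e1, e2]
  have p1 : (0:ℝ) < (2 * π) ^ ((n * k : ℝ) / 2) := Real.rpow_pos_of_pos h2π _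
  have p2 : (0:ℝ) < Sig.det ^ (-(k : ℝ) / 2) := Real.rpow_pos_of_pos hSig.det_pos _
  have hnk : ((n : ℝ) * k) = ((n * k : ℕ) : ℝ) := by push_cast; ring
  field_simp
  have p3 : Sig.det ^ (-((k:ℝ) / 2)) ≠ 0 := (Real.rpow_pos_of_pos hSig.det_pos _).ne'
  rw [div_eq_iff p3]
  ring
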